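/- arXiv:1405.6561 — 3 statements merged into one kernel-verified Lean document; each statement's English description precedes it below -/
import Mathlib

section
/- Let Π be the root system of a split real simple Lie algebra and let α, β be roots. If for every root γ the Killing numbers 2⟨γ,α⟩/⟨γ,γ⟩ and 2⟨γ,β⟩/⟨γ,γ⟩ are congruent modulo 2, and α ≠ ±β, then ⟨α,β⟩ = 0. Equivalently: if ⟨α,β⟩ ≠ 0 and α ≠ ±β, then there exists a root γ (namely γ = α or γ = β) such that 2⟨γ,α⟩/⟨γ,γ⟩ and 2⟨γ,β⟩/⟨γ,γ⟩ differ by an odd integer. -/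
open scoped RealInnerProductSpace

/-- Corollary: if two roots of a reduced crystallographic root system have all their
Killing numbers congruent mod 2 and are distinct up to sign, they are orthogonal.
Stated in the equivalent form: if `⟪α,β⟫ ≠ 0` and `α ≠ ±β`, then some root `γ`
(namely `γ = α` or `γ = β`) gives Killing numbers differing by an odd integer. -/
theorem stmt0 {V : Type*} [NormedAddCommGroup V] [InnerProductSpace ℝ V]
    (Rt : Set V)
    (hne : ∀ α ∈ Rt, α ≠ (0 : V))
    (hcrys : ∀ γ ∈ Rt, ∀ α ∈ Rt, ∃ k : ℤ, 2 * ⟪γ, α⟫ / ⟪γ, γ⟫ = (k : ℝ))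
    (hred : ∀ α ∈ Rt, ∀ c : ℝ, c • α ∈ Rt → c = 1 ∨ c = -1)
    (α β : V) (hα : α ∈ Rt) (hβ : β ∈ Rt)
    (hab : ⟪α, β⟫ ≠ 0) (h1 : α ≠ β) (h2 : α ≠ -β) :
    ∃ γ ∈ Rt, (γ = α ∨ γ = β) ∧
      ∃ k : ℤ, 2 * ⟪γ, α⟫ / ⟪γ, γ⟫ - 2 * ⟪γ, β⟫ / ⟪γ, γ⟫ = 2 * k + 1 := by
  have hα0 : α ≠ 0 := hne α hα
  have hβ0 : β ≠ 0 := hne β hβ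
  have haa : (0:ℝ) < ⟪α, α⟫ :=
    lt_of_le_of_ne real_inner_self_nonneg fun h => hα0 (inner_self_eq_zero.1 h.symm)
  have hbb : (0:ℝ) < ⟪β, β⟫ :=
    lt_of_le_of_ne real_inner_self_nonneg fun h => hβ0 (inner_self_eq_zero.1 h.symm)
  obtain ⟨k1, hk1⟩ := hcrys α hα β hβ
  obtain ⟨k2, hk2⟩ := hcrys β hβ α hα
  -- strict Cauchy-Schwarz since α, β are not proportional
  have hstrict : |⟪α, β⟫| < ‖α‖ * ‖β‖ := by
    rcases lt_or_eq_of_le (abs_real_inner_le_norm α β) with h | h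
    · exact h
    · exfalso
      have : |⟪α, β⟫ / (‖α‖ * ‖β‖)| = 1 := by
        rw [abs_div, h, abs_of_nonneg (by positivity),
          div_self (mul_pos (norm_pos_iff.2 hα0) (norm_pos_iff.2 hβ0)).ne']
      obtain ⟨-, r, hr0, hr⟩ := (abs_real_inner_div_norm_mul_norm_eq_one_iff α β).1 this
      rcases hred α hα r (hr ▸ hβ) with h | h
      · exact h1 (by rw [hr, h, one_smul])
      · exact h2 (by rw [hr, h, neg_smul, one_smul, neg_neg])
  -- product of Killing numbers is in (0, 4)
  have hprod : (k1 : ℝ) * k2 = 4 * ⟪α, β⟫ ^ 2 / (⟪α, α⟫ * ⟪β, β⟫) := by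
    rw [← hk1, ← hk2, real_inner_comm β α]
    field_simp
    ring
  have hpos : (0:ℝ) < (k1 : ℝ) * k2 := by
    rw [hprod]
    have : (0:ℝ) < ⟪α, β⟫ ^ 2 := by positivity
    positivity
  have hlt : (k1 : ℝ) * k2 < 4 := by
    rw [hprod, div_lt_iff₀ (by positivity)]
    have h2' : ⟪α, β⟫ ^ 2 < (‖α‖ * ‖β‖) ^ 2 := by
      calc ⟪α, β⟫ ^ 2 = |⟪α, β⟫| ^ 2 := (sq_abs _).symm
        _ < (‖α‖ * ‖β‖) ^ 2 := by
            apply pow_lt_pow_left₀ hstrict (abs_nonneg _)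
            norm_num
    have hnorms : ⟪α, α⟫ * ⟪β, β⟫ = (‖α‖ * ‖β‖) ^ 2 := by
      rw [real_inner_self_eq_norm_sq, real_inner_self_eq_norm_sq]; ring
    nlinarith
  have hkpos : 0 < k1 * k2 := by exact_mod_cast (by push_cast; exact hpos : (0:ℝ) < ((k1 * k2 : ℤ) : ℝ))
  have hklt : k1 * k2 < 4 := by exact_mod_cast (by push_cast; exact hlt : ((k1 * k2 : ℤ) : ℝ) < 4)
  -- hence k1 and k2 are not both even
  have hodd : Odd k1 ∨ Odd k2 := by
    by_contra h
    push_neg at h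
    rw [Int.not_odd_iff_even, Int.not_odd_iff_even] at h
    obtain ⟨⟨a, ha⟩, ⟨b, hb⟩⟩ := h
    subst ha hb
    ring_nf at hkpos hklt
    omega
  have hself_a : 2 * ⟪α, α⟫ / ⟪α, α⟫ = 2 := by field_simp
  have hself_b : 2 * ⟪β, β⟫ / ⟪β, β⟫ = 2 := by field_simp
  rcases hodd with ⟨m, hm⟩ | ⟨m, hm⟩
  · refine ⟨α, hα, Or.inl rfl, -m, ?_⟩
    rw [hself_a, hk1, hm]
    push_cast; ring
  · refine ⟨β, hβ, Or.inr rfl, m - 1, ?_⟩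
    rw [hself_b, hk2, hm]
    push_cast; ring
end

section
/- In the root system A_l realized as {λ_i − λ_j : 1 ≤ i ≠ j ≤ l+1} in ℝ^{l+1} (λ_i the standard basis vectors, with the standard inner product), suppose l ≥ 4. Then for any two distinct positive roots α = λ_i − λ_j (i < j) and β = λ_r − λ_s (r < s) with (i,j) ≠ (r,s), there exists a root γ such that 2⟨γ,α⟩/⟨γ,γ⟩ − 2⟨γ,β⟩/⟨γ,γ⟩ is odd. -/
noncomputable section

/-- Standard dot product on `ℝⁿ`. -/
def dotp {n : ℕ} (x y : Fin n → ℝ) : ℝ := ∑ i, x i * y i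

/-- Killing number `2⟨γ,α⟩/⟨γ,γ⟩`. -/
def kil {n : ℕ} (γ α : Fin n → ℝ) : ℝ := 2 * dotp γ α / dotp γ γ

/-- Standard basis vector `λ_a` of `ℝⁿ`. -/
def lamv {n : ℕ} (a : Fin n) : Fin n → ℝ := fun i => if i = a then 1 else 0

/-- Roots of `A_l` in `ℝ^{l+1}`: the vectors `λ_a − λ_b`, `a ≠ b`. -/
def rootsA (n : ℕ) : Set (Fin n → ℝ) :=
  {v | ∃ a b : Fin n, a ≠ b ∧ v = lamv a - lamv b}

lemma dotp_lam {n : ℕ} (a b c d : Fin n) :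
    dotp (lamv a - lamv b) (lamv c - lamv d) =
      (if c = a then (1:ℝ) else 0) - (if c = b then 1 else 0)
        - (if d = a then 1 else 0) + (if d = b then 1 else 0) := by
  simp only [dotp, lamv, Pi.sub_apply, sub_mul, mul_sub, ite_mul, one_mul, zero_mul,
    mul_ite, mul_one, mul_zero]
  rw [Finset.sum_sub_distrib]
  simp only [Finset.sum_ite_eq', Finset.mem_univ, if_true]
  ring

lemma kil_lam {n : ℕ} (a b c d : Fin n) (hab : a ≠ b) :
    kil (lamv a - lamv b) (lamv c - lamv d) =
      (if c = a then (1:ℝ) else 0) - (if c = b then 1 else 0)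
        - (if d = a then 1 else 0) + (if d = b then 1 else 0) := by
  have h2 : dotp (lamv a - lamv b) (lamv a - lamv b) = 2 := by
    rw [dotp_lam]; simp [hab, hab.symm]; norm_num
  rw [kil, h2, dotp_lam]
  ring

/-- For `A_l`, `l ≥ 4` (so `n = l+1 ≥ 5`), any two distinct positive roots are not
M-equivalent: some root `γ` gives Killing numbers differing by an odd integer. -/
theorem stmt1 {n : ℕ} (hn : 5 ≤ n) (i j r s : Fin n)
    (hij : i < j) (hrs : r < s) (hne : (i, j) ≠ (r, s)) :
    ∃ γ ∈ rootsA n, ∃ k : ℤ,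
      kil γ (lamv i - lamv j) - kil γ (lamv r - lamv s) = 2 * k + 1 := by
  -- find a fresh index b
  have hcard : ({i, j, r, s} : Finset (Fin n)).card < Fintype.card (Fin n) := by
    have h4 : ({i, j, r, s} : Finset (Fin n)).card ≤ 4 := by
      refine le_trans (Finset.card_insert_le _ _) ?_
      refine Nat.succ_le_succ ?_
      refine le_trans (Finset.card_insert_le _ _) ?_
      refine Nat.succ_le_succ ?_
      refine le_trans (Finset.card_insert_le _ _) ?_
      simp
    have : 5 ≤ Fintype.card (Fin n) := by simpa using hn
    omega
  have hneq : ({i, j, r, s} : Finset (Fin n)) ≠ Finset.univ := by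
    intro h; rw [h, Finset.card_univ] at hcard; exact lt_irrefl _ hcard
  obtain ⟨b, -, hb⟩ :=
    Finset.exists_of_ssubset ((Finset.subset_univ _).ssubset_of_ne hneq)
  simp only [Finset.mem_insert, Finset.mem_singleton, not_or] at hb
  obtain ⟨hbi, hbj, hbr, hbs⟩ := hb
  rcases eq_or_ne i r with hir | hir
  · -- i = r, hence j ≠ s; take γ = λ_j − λ_b
    have hjs : j ≠ s := by
      intro h; exact hne (by rw [hir, h])
    refine ⟨lamv j - lamv b, ⟨j, b, fun h => hbj h.symm, rfl⟩, -1, ?_⟩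
    rw [kil_lam _ _ _ _ (fun h => hbj h.symm), kil_lam _ _ _ _ (fun h => hbj h.symm)]
    have h1 : i ≠ j := hij.ne
    have h2 : r ≠ j := hir ▸ hij.ne
    have h3 : s ≠ j := hjs.symm
    have hib : i ≠ b := fun h => hbi h.symm
    have hjb : j ≠ b := fun h => hbj h.symm
    have hrb : r ≠ b := fun h => hbr h.symm
    have hsb : s ≠ b := fun h => hbs h.symm
    simp [h1, h2, h3, hib, hjb, hrb, hsb]
    norm_num
  · rcases eq_or_ne i s with his | his
    · -- i = s : take γ = λ_r − λ_b
      refine ⟨lamv r - lamv b, ⟨r, b, fun h => hbr h.symm, rfl⟩, -1, ?_⟩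
      rw [kil_lam _ _ _ _ (fun h => hbr h.symm), kil_lam _ _ _ _ (fun h => hbr h.symm)]
      have h1 : i ≠ r := hir
      have h2 : j ≠ r := by
        intro h; have : r < s := hrs; rw [← his, ← h] at this; exact absurd this (lt_asymm hij)
      have h3 : s ≠ r := hrs.ne'
      have hib : i ≠ b := fun h => hbi h.symm
      have hjb : j ≠ b := fun h => hbj h.symm
      have hrb : r ≠ b := fun h => hbr h.symm
      have hsb : s ≠ b := fun h => hbs h.symm
      simp [h1, h2, h3, hib, hjb, hrb, hsb]
      norm_num
    · -- i ∉ {r, s} : take γ = λ_i − λ_b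
      refine ⟨lamv i - lamv b, ⟨i, b, fun h => hbi h.symm, rfl⟩, 0, ?_⟩
      rw [kil_lam _ _ _ _ (fun h => hbi h.symm), kil_lam _ _ _ _ (fun h => hbi h.symm)]
      have h1 : j ≠ i := hij.ne'
      have h2 : r ≠ i := hir.symm
      have h3 : s ≠ i := his.symm
      have hib : i ≠ b := fun h => hbi h.symm
      have hjb : j ≠ b := fun h => hbj h.symm
      have hrb : r ≠ b := fun h => hbr h.symm
      have hsb : s ≠ b := fun h => hbs h.symm
      simp [h1, h2, h3, hib, hjb, hrb, hsb]
end
end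

section
/- In the root system B_l with l ≥ 5, if 3 ≤ i then the short root λ_i is not M-equivalent to the long root λ_1 − λ_2: there exists a root γ such that 2⟨γ, λ_i⟩/⟨γ,γ⟩ and 2⟨γ, λ_1 − λ_2⟩/⟨γ,γ⟩ differ by an odd integer. In fact γ = λ_i + λ_k for a suitable k works. -/
noncomputable section

/-- Roots of `B_l` in `ℝ^l`: short roots `±λ_a` and long roots `±λ_a ± λ_b`, `a ≠ b`. -/
def rootsB (n : ℕ) : Set (Fin n → ℝ) :=
  {v | (∃ a : Fin n, v = lamv a ∨ v = -lamv a) ∨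
       (∃ a b : Fin n, a ≠ b ∧
         (v = lamv a + lamv b ∨ v = lamv a - lamv b ∨ v = -lamv a - lamv b))}

lemma dotp_lamv {n : ℕ} (a b : Fin n) :
    dotp (lamv a) (lamv b) = if a = b then 1 else 0 := by
  simp [dotp, lamv, Finset.sum_ite_eq', eq_comm]

lemma dotp_add_left {n : ℕ} (x y z : Fin n → ℝ) :
    dotp (x + y) z = dotp x z + dotp y z := by
  simp [dotp, add_mul, Finset.sum_add_distrib]

lemma dotp_add_right {n : ℕ} (x y z : Fin n → ℝ) :
    dotp x (y + z) = dotp x y + dotp x z := by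
  simp [dotp, mul_add, Finset.sum_add_distrib]

lemma dotp_sub_right {n : ℕ} (x y z : Fin n → ℝ) :
    dotp x (y - z) = dotp x y - dotp x z := by
  simp [dotp, mul_sub, Finset.sum_sub_distrib]

/-- In `B_l`, `l ≥ 5`: for indices `i` with `3 ≤ i` (0-based: `2 ≤ i`), the short
root `λ_i` is not M-equivalent to the long root `λ_1 − λ_2`: some root `γ`, which
may be taken of the form `λ_i + λ_k`, gives Killing numbers differing by an odd
integer. -/
theorem stmt4 {l : ℕ} (hl : 5 ≤ l) (i : Fin l) (hi : 2 ≤ (i : ℕ)) :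
    ∃ γ ∈ rootsB l, (∃ k' : Fin l, k' ≠ i ∧ γ = lamv i + lamv k') ∧
      ∃ k : ℤ,
        kil γ (lamv i) - kil γ (lamv ⟨0, by omega⟩ - lamv ⟨1, by omega⟩) = 2 * k + 1 := by
  set k' : Fin l := if (i : ℕ) = 2 then ⟨3, by omega⟩ else ⟨2, by omega⟩ with hk'
  have hki : k' ≠ i := by
    rcases eq_or_ne (i : ℕ) 2 with h | h <;>
      simp [hk', h, Fin.ext_iff] <;> omega
  have hk0 : k' ≠ (⟨0, by omega⟩ : Fin l) := by
    rcases eq_or_ne (i : ℕ) 2 with h | h <;> simp [hk', h, Fin.ext_iff]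
  have hk1 : k' ≠ (⟨1, by omega⟩ : Fin l) := by
    rcases eq_or_ne (i : ℕ) 2 with h | h <;> simp [hk', h, Fin.ext_iff]
  have hi0 : i ≠ (⟨0, by omega⟩ : Fin l) := by
    simp [Fin.ext_iff]; omega
  have hi1 : i ≠ (⟨1, by omega⟩ : Fin l) := by
    simp [Fin.ext_iff]; omega
  refine ⟨lamv i + lamv k', Or.inr ⟨i, k', hki.symm, Or.inl rfl⟩, ⟨k', hki, rfl⟩, 0, ?_⟩
  have h1 : dotp (lamv i + lamv k') (lamv i) = 1 := by
    simp [dotp_add_left, dotp_lamv, hki]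
  have h2 : dotp (lamv i + lamv k') (lamv i + lamv k') = 2 := by
    simp [dotp_add_left, dotp_add_right, dotp_lamv, hki, hki.symm]
    norm_num
  have h3 : dotp (lamv i + lamv k')
      (lamv (⟨0, by omega⟩ : Fin l) - lamv ⟨1, by omega⟩) = 0 := by
    simp [dotp_add_left, dotp_sub_right, dotp_lamv, hi0, hi1, hk0, hk1]
  simp [kil, h1, h2, h3]
end
end
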